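/- For every N ≥ 2, the average cost of the optimal (criss-cross) Hamiltonian cycle of the bipartite Euclidean TSP in one dimension with cost exponent p = 2 and uniformly distributed points equals E[E_N^{(2)}] = (2/3) · (N² + 4N − 3) / (N+1)². -/

import Mathlib

open MeasureTheory

/-- The law of a pair of two independent samples of `N` i.i.d. points uniformly
distributed on `[0,1]` (red sample, blue sample). -/
noncomputable def unifPair (N : ℕ) : Measure ((Fin N → ℝ) × (Fin N → ℝ)) :=
  (Measure.pi fun _ : Fin N => volume.restrict (Set.Icc (0:ℝ) 1)).prod
    (Measure.pi fun _ : Fin N => volume.restrict (Set.Icc (0:ℝ) 1))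

/-- The increasing order statistics of a finite sample `x`. -/
noncomputable def orderStat {N : ℕ} (x : Fin N → ℝ) : Fin N → ℝ := x ∘ Tuple.sort x

/-- The cost `E_N^{(2)}` of the optimal (criss-cross) bipartite TSP cycle with cost
exponent `p = 2`:  `E_N^{(2)} = (r₁−b₁)² + (r_N−b_N)² + Σ_{k=1}^{N−1} [(b_{k+1}−r_k)²
+ (r_{k+1}−b_k)²]`, where `r` and `b` are the increasing order statistics of the two
samples (0-indexed below). -/
noncomputable def crisscrossCostSq (N : ℕ) (hN : 1 ≤ N) (q : (Fin N → ℝ) × (Fin N → ℝ)) : ℝ :=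
  (orderStat q.1 ⟨0, hN⟩ - orderStat q.2 ⟨0, hN⟩) ^ 2
  + (orderStat q.1 ⟨N - 1, by omega⟩ - orderStat q.2 ⟨N - 1, by omega⟩) ^ 2
  + ∑ k : Fin (N - 1),
      ((orderStat q.2 ⟨k.val + 1, by have := k.isLt; omega⟩
          - orderStat q.1 ⟨k.val, by have := k.isLt; omega⟩) ^ 2
       + (orderStat q.1 ⟨k.val + 1, by have := k.isLt; omega⟩
          - orderStat q.2 ⟨k.val, by have := k.isLt; omega⟩) ^ 2)


open Set Filter


noncomputable def μ1 : Measure ℝ := volume.restrict (Set.Icc (0:ℝ) 1)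
instance : SigmaFinite μ1 := by unfold μ1; infer_instance
noncomputable def μN (N : ℕ) : Measure (Fin N → ℝ) := Measure.pi fun _ => μ1

instance : IsProbabilityMeasure μ1 := ⟨by simp [μ1]⟩
instance (N : ℕ) : IsProbabilityMeasure (μN N) := by
  constructor
  rw [μN, Measure.pi_univ]
  simp [measure_univ]

lemma μ1_Iic {t : ℝ} (h0 : 0 ≤ t) (h1 : t ≤ 1) : μ1 (Iic t) = ENNReal.ofReal t := by
  rw [μ1, Measure.restrict_apply measurableSet_Iic]
  have : Iic t ∩ Icc 0 1 = Icc 0 t := by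
    ext y; simp only [mem_inter_iff, mem_Iic, mem_Icc]
    constructor
    · rintro ⟨a, b, _⟩; exact ⟨b, a⟩
    · rintro ⟨a, b⟩; exact ⟨b, a, b.trans h1⟩
  rw [this, Real.volume_Icc, sub_zero]

lemma μ1_Ioi {t : ℝ} (h0 : 0 ≤ t) (h1 : t ≤ 1) : μ1 (Ioi t) = ENNReal.ofReal (1 - t) := by
  rw [μ1, Measure.restrict_apply measurableSet_Ioi]
  have : Ioi t ∩ Icc 0 1 = Ioc t 1 := by
    ext y; simp only [mem_inter_iff, mem_Ioi, mem_Icc, mem_Ioc]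
    constructor
    · rintro ⟨a, _, b⟩; exact ⟨a, b⟩
    · rintro ⟨a, b⟩; exact ⟨a, h0.trans a.le, b⟩
  rw [this, Real.volume_Ioc]


lemma orderStat_le_iff {N : ℕ} (x : Fin N → ℝ) (i : Fin N) (t : ℝ) :
    orderStat x i ≤ t ↔ (i : ℕ) < Fintype.card {j // x j ≤ t} := by
  have h := Tuple.lt_card_le_iff_apply_le_of_monotone (f := orderStat x) (a := t)
    (Tuple.monotone_sort x) (j := i)
  rw [← Fintype.card_subtype] at h
  rw [← h]
  constructor
  · intro hh
    have e : {j // orderStat x j ≤ t} ≃ {j // x j ≤ t} :=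
      (Equiv.subtypeEquiv (Tuple.sort x) (fun j => Iff.rfl))
    rwa [Fintype.card_congr e] at hh
  · intro hh
    have e : {j // orderStat x j ≤ t} ≃ {j // x j ≤ t} :=
      (Equiv.subtypeEquiv (Tuple.sort x) (fun j => Iff.rfl))
    rwa [Fintype.card_congr e]

lemma measurable_card_le {N : ℕ} (t : ℝ) :
    Measurable (fun x : Fin N → ℝ => Fintype.card {j // x j ≤ t}) := by
  have : (fun x : Fin N → ℝ => Fintype.card {j // x j ≤ t})
      = fun x => ∑ j : Fin N, if x j ≤ t then 1 else 0 := by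
    ext x
    rw [Fintype.card_subtype, Finset.card_filter]
  rw [this]
  exact Finset.measurable_sum _ (fun j _ =>
    Measurable.ite (measurableSet_le (measurable_pi_apply j) measurable_const)
      measurable_const measurable_const)

lemma measurable_orderStat {N : ℕ} (i : Fin N) :
    Measurable (fun x : Fin N → ℝ => orderStat x i) := by
  apply measurable_of_Iic
  intro t
  have : (fun x : Fin N → ℝ => orderStat x i) ⁻¹' Iic t
      = (fun x : Fin N → ℝ => Fintype.card {j // x j ≤ t}) ⁻¹' (Set.Ioi (i : ℕ)) := by
    ext x; simp [orderStat_le_iff]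
  rw [this]
  exact measurable_card_le t measurableSet_Ioi

lemma meas_orderStat_gt (N : ℕ) (i : Fin N) {t : ℝ} (h0 : 0 ≤ t) (h1 : t ≤ 1) :
    μN N {x | t < orderStat x i}
      = ∑ j ∈ Finset.range (i + 1),
          (N.choose j) * ENNReal.ofReal t ^ j * ENNReal.ofReal (1 - t) ^ (N - j) := by
  classical
  set A : Finset (Fin N) → Set (Fin N → ℝ) :=
    fun S => Set.pi Set.univ (fun j => if j ∈ S then Iic t else Ioi t) with hA
  have hAmem : ∀ (S : Finset (Fin N)) (x : Fin N → ℝ),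
      x ∈ A S ↔ Finset.univ.filter (fun j => x j ≤ t) = S := by
    intro S x
    simp only [hA, Set.mem_pi, Set.mem_univ, forall_true_left]
    constructor
    · intro h
      ext j
      simp only [Finset.mem_filter, Finset.mem_univ, true_and]
      constructor
      · intro hj
        by_contra hjS
        have := h j
        rw [if_neg hjS] at this
        exact absurd hj (not_le.mpr this)
      · intro hj
        have := h j
        rwa [if_pos hj] at this
    · intro h j
      by_cases hj : j ∈ S
      · rw [if_pos hj]
        have : j ∈ Finset.univ.filter (fun j => x j ≤ t) := h ▸ hj
        simpa using this
      · rw [if_neg hj]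
        have : j ∉ Finset.univ.filter (fun j => x j ≤ t) := h ▸ hj
        simp only [Finset.mem_filter, Finset.mem_univ, true_and, not_le] at this
        exact this
  have hset : {x : Fin N → ℝ | t < orderStat x i}
      = ⋃ S ∈ Finset.univ.powerset.filter (fun S : Finset (Fin N) => S.card ≤ (i : ℕ)), A S := by
    ext x
    simp only [Set.mem_setOf_eq, Set.mem_iUnion, Finset.mem_filter, Finset.mem_powerset]
    rw [← not_le, orderStat_le_iff, not_lt]
    constructor
    · intro h
      refine ⟨Finset.univ.filter (fun j => x j ≤ t), ⟨Finset.subset_univ _, ?_⟩, (hAmem _ x).2 rfl⟩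
      rwa [← Fintype.card_subtype]
    · rintro ⟨S, ⟨-, hcard⟩, hx⟩
      rw [Fintype.card_subtype, (hAmem S x).1 hx]
      exact hcard
  have hAmeas : ∀ S : Finset (Fin N), MeasurableSet (A S) := by
    intro S
    apply MeasurableSet.pi Set.countable_univ
    intro j _
    by_cases hj : j ∈ S
    · rw [if_pos hj]; exact measurableSet_Iic
    · rw [if_neg hj]; exact measurableSet_Ioi
  have hdisj : Set.PairwiseDisjoint
      ↑(Finset.univ.powerset.filter (fun S : Finset (Fin N) => S.card ≤ (i : ℕ))) A := by
    intro S _ T _ hST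
    refine Set.disjoint_left.2 fun x hxS hxT => hST ?_
    rw [← (hAmem S x).1 hxS, ← (hAmem T x).1 hxT]
  have hmeasA : ∀ S : Finset (Fin N),
      μN N (A S) = ENNReal.ofReal t ^ S.card * ENNReal.ofReal (1 - t) ^ (N - S.card) := by
    intro S
    rw [hA, μN, Measure.pi_pi]
    have : ∀ j : Fin N, μ1 (if j ∈ S then Iic t else Ioi t)
        = if j ∈ S then ENNReal.ofReal t else ENNReal.ofReal (1 - t) := by
      intro j
      by_cases hj : j ∈ S
      · rw [if_pos hj, if_pos hj, μ1_Iic h0 h1]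
      · rw [if_neg hj, if_neg hj, μ1_Ioi h0 h1]
    simp_rw [this]
    rw [Finset.prod_ite, Finset.prod_const, Finset.prod_const]
    have c1 : Finset.univ.filter (fun j => j ∈ S) = S := by ext j; simp
    have c2 : (Finset.univ.filter (fun j => ¬ j ∈ S)).card = N - S.card := by
      rw [Finset.filter_not, c1, Finset.card_sdiff_of_subset (Finset.subset_univ S), Finset.card_univ,
        Fintype.card_fin]
    rw [c1, c2]
  rw [hset, measure_biUnion_finset hdisj (fun S _ => hAmeas S)]
  have hsplit : Finset.univ.powerset.filter (fun S : Finset (Fin N) => S.card ≤ (i : ℕ))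
      = (Finset.range (i + 1)).biUnion (fun j => Finset.powersetCard j Finset.univ) := by
    ext S
    simp only [Finset.mem_filter, Finset.mem_powerset, Finset.mem_biUnion, Finset.mem_range,
      Finset.mem_powersetCard_univ]
    constructor
    · rintro ⟨-, h⟩; exact ⟨S.card, Nat.lt_succ_of_le h, rfl⟩
    · rintro ⟨j, hj, rfl⟩; exact ⟨Finset.subset_univ _, Nat.lt_succ_iff.mp hj⟩
  rw [hsplit, Finset.sum_biUnion]
  · apply Finset.sum_congr rfl
    intro j hj
    rw [Finset.sum_congr rfl (fun S hS => ?_), Finset.sum_const,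
      Finset.card_powersetCard, Finset.card_univ, Fintype.card_fin, nsmul_eq_mul, mul_assoc]
    rw [Finset.mem_powersetCard_univ] at hS
    rw [hmeasA S, hS]
  · intro a _ b _ hab
    refine Finset.disjoint_left.2 fun S hSa hSb => hab ?_
    rw [Finset.mem_powersetCard_univ] at hSa hSb
    rw [← hSa, ← hSb]

lemma beta_nat (a b : ℕ) :
    ∫ t in (0:ℝ)..1, t ^ a * (1 - t) ^ b
      = (a.factorial * b.factorial : ℝ) / (a + b + 1).factorial := by
  induction b generalizing a with
  | zero =>
    simp only [pow_zero, mul_one, integral_pow, one_pow, Nat.factorial]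
    have : ((a.factorial:ℝ)) ≠ 0 := Nat.cast_ne_zero.2 (Nat.factorial_ne_zero _)
    push_cast
    rw [zero_pow (by omega)]
    field_simp
    norm_num
  | succ b ih =>
    have key : ∫ t in (0:ℝ)..1, t ^ a * (1 - t) ^ (b + 1)
        = ((b:ℝ) + 1) / ((a:ℝ) + 1) * ∫ t in (0:ℝ)..1, t ^ (a+1) * (1 - t) ^ b := by
      have hu : ∀ t ∈ Set.uIcc (0:ℝ) 1,
          HasDerivAt (fun y : ℝ => (1 - y) ^ (b + 1))
            (-((b:ℝ) + 1) * (1 - t) ^ b) t := by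
        intro t _
        have h1 : HasDerivAt (fun y : ℝ => 1 - y) (-1) t := by
          simpa using (hasDerivAt_id t).const_sub 1
        have := (h1.pow (b + 1))
        refine this.congr_deriv ?_
        rw [Nat.add_sub_cancel]
        push_cast
        ring
      have hv : ∀ t ∈ Set.uIcc (0:ℝ) 1,
          HasDerivAt (fun y : ℝ => y ^ (a + 1) / ((a:ℝ) + 1)) (t ^ a) t := by
        intro t _
        have := (hasDerivAt_pow (a + 1) t).div_const ((a:ℝ) + 1)
        refine this.congr_deriv ?_
        rw [Nat.add_sub_cancel]
        have h : ((a:ℝ) + 1) ≠ 0 := by positivity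
        push_cast
        field_simp
      have hiu : IntervalIntegrable (fun t : ℝ => -((b:ℝ) + 1) * (1 - t) ^ b)
          volume 0 1 := (Continuous.intervalIntegrable (by continuity) _ _)
      have hiv : IntervalIntegrable (fun t : ℝ => t ^ a) volume 0 1 :=
        (Continuous.intervalIntegrable (by continuity) _ _)
      have ibp := intervalIntegral.integral_mul_deriv_eq_deriv_mul hu hv hiu hiv
      rw [intervalIntegral.integral_congr (g := fun t : ℝ => t ^ a * (1-t)^(b+1))
        (fun t _ => by ring)] at ibp
      rw [ibp]
      simp only [one_pow, zero_pow, sub_zero, sub_self]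
      rw [intervalIntegral.integral_congr
        (g := fun t : ℝ => (-((b:ℝ)+1)/((a:ℝ)+1)) • (t ^ (a+1) * (1-t)^b)) (fun t _ => by
          simp only [smul_eq_mul]
          field_simp), intervalIntegral.integral_smul]
      have hb1 : (1:ℝ) - 1 = 0 := by ring
      simp only [smul_eq_mul]
      rw [zero_pow (by omega), zero_pow (by omega)]
      ring
    rw [key, ih (a + 1)]
    have h1 : ((a:ℝ) + 1) ≠ 0 := by positivity
    have e1 : (a + 1 + b + 1) = (a + (b+1) + 1) := by omega
    rw [e1]
    have : ((a + (b+1) + 1).factorial : ℝ) ≠ 0 := Nat.cast_ne_zero.2 (Nat.factorial_ne_zero _)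
    field_simp [Nat.factorial_succ]
    rw [Nat.factorial_succ, Nat.factorial_succ]
    push_cast
    ring

lemma moment_formula {α : Type*} [MeasurableSpace α] (μ : Measure α) [IsProbabilityMeasure μ]
    {f : α → ℝ} (hf : Measurable f) (hae : ∀ᵐ x ∂μ, f x ∈ Icc (0:ℝ) 1)
    {g : ℝ → ℝ} (hg : Continuous g) (hg0 : ∀ t, 0 ≤ t → 0 ≤ g t) :
    ∫ x, (∫ t in (0:ℝ)..f x, g t) ∂μ
      = ∫ t in (0:ℝ)..1, g t * (μ {x | t < f x}).toReal := by
  have f_nn : 0 ≤ᵐ[μ] f := hae.mono fun x hx => hx.1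
  have G_cont : Continuous (fun c : ℝ => ∫ t in (0:ℝ)..c, g t) :=
    intervalIntegral.continuous_primitive (fun a b => hg.intervalIntegrable a b) 0
  have Gf_nn : 0 ≤ᵐ[μ] fun x => ∫ t in (0:ℝ)..f x, g t := by
    filter_upwards [hae] with x hx
    exact intervalIntegral.integral_nonneg hx.1 (fun t ht => hg0 t ht.1)
  have g_nn_ae : ∀ᵐ t ∂(volume.restrict (Ioi (0:ℝ))), 0 ≤ g t := by
    rw [ae_restrict_iff' measurableSet_Ioi]
    exact Eventually.of_forall fun t ht => hg0 t (le_of_lt ht)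
  have key := lintegral_comp_eq_lintegral_meas_lt_mul μ f_nn hf.aemeasurable
    (fun t _ => hg.intervalIntegrable 0 t) g_nn_ae
  -- split the t-domain
  have hsplit : (Ioi (0:ℝ)) = Ioc (0:ℝ) 1 ∪ Ioi 1 := (Ioc_union_Ioi_eq_Ioi zero_le_one).symm
  have hnull : ∀ t : ℝ, 1 < t → μ {x | t < f x} = 0 := by
    intro t ht
    refine measure_mono_null (fun x hx => ?_) (ae_iff.1 hae)
    simp only [mem_setOf_eq, mem_Icc] at hx ⊢
    exact fun h => absurd (lt_trans ht hx) (not_lt.2 h.2)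
  have hIoi1 : ∫⁻ t in Ioi (1:ℝ), μ {a | t < f a} * ENNReal.ofReal (g t) = 0 := by
    rw [setLIntegral_congr_fun measurableSet_Ioi
      (fun t (ht : t ∈ Ioi (1:ℝ)) => by
        rw [hnull t ht, zero_mul])]
    simp
  have key2 : ∫⁻ x, ENNReal.ofReal (∫ t in (0:ℝ)..f x, g t) ∂μ
      = ∫⁻ t in Ioc (0:ℝ) 1, μ {a | t < f a} * ENNReal.ofReal (g t) := by
    rw [key, hsplit, lintegral_union measurableSet_Ioi (Ioc_disjoint_Ioi le_rfl), hIoi1, add_zero]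
  -- convert RHS lintegral to a Bochner integral
  have meas_toReal : Measurable fun t : ℝ => (μ {a | t < f a}).toReal := by
    refine Measurable.ennreal_toReal ?_
    exact Antitone.measurable (fun _ _ hst => measure_mono (fun _ h => lt_of_le_of_lt hst h))
  have h_int : IntegrableOn (fun t : ℝ => (μ {a | t < f a}).toReal * g t) (Ioc 0 1) := by
    refine Integrable.mono' (hg.integrableOn_Ioc.norm) ((meas_toReal.mul hg.measurable).aestronglyMeasurable) ?_
    refine Eventually.of_forall fun t => ?_
    simp only [Real.norm_eq_abs, abs_mul]
    have h1 : (μ {a | t < f a}).toReal ≤ 1 := by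
      have := prob_le_one (μ := μ) (s := {a | t < f a})
      exact ENNReal.toReal_le_of_le_ofReal zero_le_one (by simpa using this)
    have h2 : |(μ {a | t < f a}).toReal| = (μ {a | t < f a}).toReal := abs_of_nonneg ENNReal.toReal_nonneg
    rw [h2]
    calc (μ {a | t < f a}).toReal * |g t| ≤ 1 * |g t| :=
        mul_le_mul_of_nonneg_right h1 (abs_nonneg _)
      _ = |g t| := one_mul _
  have h_nn : ∀ᵐ t ∂(volume.restrict (Ioc (0:ℝ) 1)),
      0 ≤ (μ {a | t < f a}).toReal * g t := by
    rw [ae_restrict_iff' measurableSet_Ioc]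
    exact Eventually.of_forall fun t ht =>
      mul_nonneg ENNReal.toReal_nonneg (hg0 t ht.1.le)
  have conv : ∫⁻ t in Ioc (0:ℝ) 1, μ {a | t < f a} * ENNReal.ofReal (g t)
      = ENNReal.ofReal (∫ t in Ioc (0:ℝ) 1, (μ {a | t < f a}).toReal * g t) := by
    rw [MeasureTheory.ofReal_integral_eq_lintegral_ofReal h_int h_nn]
    apply lintegral_congr_ae
    refine Eventually.of_forall fun t => ?_
    show μ {a | t < f a} * ENNReal.ofReal (g t)
        = ENNReal.ofReal ((μ {a | t < f a}).toReal * g t)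
    rw [ENNReal.ofReal_mul ENNReal.toReal_nonneg,
      ENNReal.ofReal_toReal (measure_ne_top μ _)]
  -- put together
  rw [MeasureTheory.integral_eq_lintegral_of_nonneg_ae Gf_nn
    ((G_cont.measurable.comp hf).aestronglyMeasurable), key2, conv,
    ENNReal.toReal_ofReal (integral_nonneg_of_ae h_nn)]
  rw [intervalIntegral.integral_of_le zero_le_one]
  apply integral_congr_ae
  exact Eventually.of_forall fun t => mul_comm _ _


lemma ae_orderStat_mem {N : ℕ} (i : Fin N) :
    ∀ᵐ x ∂(μN N), orderStat x i ∈ Icc (0:ℝ) 1 := by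
  have hpi : μN N (Set.pi Set.univ (fun _ : Fin N => Icc (0:ℝ) 1)) = 1 := by
    rw [μN, Measure.pi_pi]
    simp [μ1]
  have hsub : {x : Fin N → ℝ | ¬ orderStat x i ∈ Icc (0:ℝ) 1}
      ⊆ (Set.pi Set.univ (fun _ : Fin N => Icc (0:ℝ) 1))ᶜ := by
    intro x hx hmem
    exact hx (hmem (Tuple.sort x i) trivial)
  rw [ae_iff]
  refine measure_mono_null hsub ?_
  have : μN N (Set.pi Set.univ (fun _ : Fin N => Icc (0:ℝ) 1))ᶜ
      = 1 - μN N (Set.pi Set.univ (fun _ : Fin N => Icc (0:ℝ) 1)) := by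
    rw [measure_compl (MeasurableSet.pi Set.countable_univ fun _ _ => measurableSet_Icc)
      (by rw [hpi]; exact ENNReal.one_ne_top)]
    simp [measure_univ]
  rw [this, hpi, tsub_self]

lemma toReal_dist {N : ℕ} (i : Fin N) {t : ℝ} (h0 : 0 ≤ t) (h1 : t ≤ 1) :
    (μN N {x | t < orderStat x i}).toReal
      = ∑ j ∈ Finset.range (i + 1), (N.choose j : ℝ) * t ^ j * (1 - t) ^ (N - j) := by
  rw [meas_orderStat_gt N i h0 h1, ENNReal.toReal_sum]
  · refine Finset.sum_congr rfl fun j _ => ?_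
    rw [ENNReal.toReal_mul, ENNReal.toReal_mul, ENNReal.toReal_pow, ENNReal.toReal_pow,
      ENNReal.toReal_ofReal h0, ENNReal.toReal_ofReal (by linarith)]
    simp
  · intro j _
    exact ENNReal.mul_ne_top (ENNReal.mul_ne_top (ENNReal.natCast_ne_top _)
      (ENNReal.pow_ne_top ENNReal.ofReal_ne_top)) (ENNReal.pow_ne_top ENNReal.ofReal_ne_top)

lemma choose_term (N j : ℕ) (hj : j ≤ N) :
    (N.choose j : ℝ) * ((j.factorial : ℝ) * ((N - j).factorial : ℝ)) = (N.factorial : ℝ) := by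
  rw [← Nat.cast_mul, ← Nat.cast_mul, ← mul_assoc,
    Nat.choose_mul_factorial_mul_factorial hj]

lemma E1 {N : ℕ} (i : Fin N) :
    ∫ x, orderStat x i ∂(μN N) = ((i : ℕ) + 1 : ℝ) / ((N : ℝ) + 1) := by
  have h := moment_formula (μN N) (measurable_orderStat i) (ae_orderStat_mem i)
    (g := fun _ => (1:ℝ)) continuous_const (fun _ _ => zero_le_one)
  have hL : ∫ x, (∫ t in (0:ℝ)..(orderStat x i), (1:ℝ)) ∂(μN N)
      = ∫ x, orderStat x i ∂(μN N) := by
    refine integral_congr_ae (Eventually.of_forall fun x => ?_)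
    simp
  rw [hL] at h
  rw [h]
  have hcong : ∫ t in (0:ℝ)..1, (1:ℝ) * ((μN N) {x | t < orderStat x i}).toReal
      = ∫ t in (0:ℝ)..1,
          ∑ j ∈ Finset.range (i + 1), (N.choose j : ℝ) * t ^ j * (1 - t) ^ (N - j) := by
    refine intervalIntegral.integral_congr fun t ht => ?_
    rw [Set.uIcc_of_le zero_le_one] at ht
    rw [one_mul, toReal_dist i ht.1 ht.2]
  rw [hcong, intervalIntegral.integral_finset_sum (fun j _ =>
    (Continuous.intervalIntegrable (by continuity) _ _))]
  have hterm : ∀ j ∈ Finset.range (i + 1),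
      ∫ t in (0:ℝ)..1, (N.choose j : ℝ) * t ^ j * (1 - t) ^ (N - j)
        = 1 / ((N : ℝ) + 1) := by
    intro j hj
    have hjN : j ≤ N := le_of_lt (lt_of_lt_of_le (Finset.mem_range.1 hj) i.2)
    have : ∫ t in (0:ℝ)..1, (N.choose j : ℝ) * t ^ j * (1 - t) ^ (N - j)
        = (N.choose j : ℝ) * ∫ t in (0:ℝ)..1, t ^ j * (1 - t) ^ (N - j) := by
      rw [← intervalIntegral.integral_const_mul]
      congr 1; ext t; ring
    rw [this, beta_nat, show j + (N - j) + 1 = N + 1 by omega]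
    have hF : (0:ℝ) < (N.factorial : ℝ) := by exact_mod_cast N.factorial_pos
    have hfac1 : ((N+1).factorial : ℝ) = ((N:ℝ)+1) * (N.factorial : ℝ) := by
      rw [Nat.factorial_succ]; push_cast; ring
    rw [hfac1, show (N.choose j : ℝ) * ((j.factorial:ℝ) * ((N-j).factorial:ℝ)
          / (((N:ℝ)+1) * (N.factorial:ℝ)))
        = ((N.choose j : ℝ) * ((j.factorial:ℝ) * ((N-j).factorial:ℝ)))
          / (((N:ℝ)+1) * (N.factorial:ℝ)) by ring,
      choose_term N j hjN]
    rw [div_eq_div_iff (by positivity) (by positivity)]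
    ring
  rw [Finset.sum_congr rfl hterm, Finset.sum_const, Finset.card_range, nsmul_eq_mul]
  push_cast
  ring

lemma sum_range_add_one (n : ℕ) :
    ∑ j ∈ Finset.range n, ((j:ℝ) + 1) = (n : ℝ) * ((n : ℝ) + 1) / 2 := by
  induction n with
  | zero => simp
  | succ n ih => rw [Finset.sum_range_succ, ih]; push_cast; ring

lemma E2 {N : ℕ} (i : Fin N) :
    ∫ x, (orderStat x i) ^ 2 ∂(μN N)
      = ((i : ℕ) + 1 : ℝ) * ((i : ℕ) + 2 : ℝ) / (((N : ℝ) + 1) * ((N : ℝ) + 2)) := by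
  have h := moment_formula (μN N) (measurable_orderStat i) (ae_orderStat_mem i)
    (g := fun t => 2 * t) (by continuity) (fun t ht => by simpa using mul_nonneg (by norm_num : (0:ℝ) ≤ 2) ht)
  have hL : ∫ x, (∫ t in (0:ℝ)..(orderStat x i), 2 * t) ∂(μN N)
      = ∫ x, (orderStat x i) ^ 2 ∂(μN N) := by
    refine integral_congr_ae (Eventually.of_forall fun x => ?_)
    show (∫ t in (0:ℝ)..(orderStat x i), 2 * t) = (orderStat x i) ^ 2
    rw [intervalIntegral.integral_const_mul, integral_id]
    ring
  rw [hL] at h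
  rw [h]
  have hcong : ∫ t in (0:ℝ)..1, (2 * t) * ((μN N) {x | t < orderStat x i}).toReal
      = ∫ t in (0:ℝ)..1,
          ∑ j ∈ Finset.range (i + 1), 2 * ((N.choose j : ℝ) * t ^ (j+1) * (1 - t) ^ (N - j)) := by
    refine intervalIntegral.integral_congr fun t ht => ?_
    rw [Set.uIcc_of_le zero_le_one] at ht
    rw [toReal_dist i ht.1 ht.2, Finset.mul_sum]
    refine Finset.sum_congr rfl fun j _ => ?_
    ring
  rw [hcong, intervalIntegral.integral_finset_sum (fun j _ =>
    (Continuous.intervalIntegrable (by continuity) _ _))]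
  have hterm : ∀ j ∈ Finset.range (i + 1),
      ∫ t in (0:ℝ)..1, 2 * ((N.choose j : ℝ) * t ^ (j+1) * (1 - t) ^ (N - j))
        = 2 * ((j:ℝ) + 1) / (((N : ℝ) + 1) * ((N : ℝ) + 2)) := by
    intro j hj
    have hjN : j ≤ N := le_of_lt (lt_of_lt_of_le (Finset.mem_range.1 hj) i.2)
    have : ∫ t in (0:ℝ)..1, 2 * ((N.choose j : ℝ) * t ^ (j+1) * (1 - t) ^ (N - j))
        = 2 * (N.choose j : ℝ) * ∫ t in (0:ℝ)..1, t ^ (j+1) * (1 - t) ^ (N - j) := by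
      rw [← intervalIntegral.integral_const_mul]
      congr 1; ext t; ring
    rw [this, beta_nat, show j + 1 + (N - j) + 1 = N + 2 by omega]
    have hfac2 : ((N+2).factorial : ℝ) = ((N:ℝ)+2) * (((N:ℝ)+1) * (N.factorial : ℝ)) := by
      rw [Nat.factorial_succ, Nat.factorial_succ]; push_cast; ring
    have hfacj : ((j+1).factorial : ℝ) = ((j:ℝ)+1) * (j.factorial : ℝ) := by
      rw [Nat.factorial_succ]; push_cast; ring
    have hF : (0:ℝ) < (N.factorial : ℝ) := by exact_mod_cast N.factorial_pos
    rw [hfac2, hfacj,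
      show (2:ℝ) * (N.choose j : ℝ) * (((j:ℝ)+1) * (j.factorial:ℝ) * ((N-j).factorial:ℝ)
          / (((N:ℝ)+2) * (((N:ℝ)+1) * (N.factorial:ℝ))))
        = (2 * ((j:ℝ)+1)) * (((N.choose j : ℝ) * ((j.factorial:ℝ) * ((N-j).factorial:ℝ)))
          / (((N:ℝ)+2) * (((N:ℝ)+1) * (N.factorial:ℝ)))) by ring,
      choose_term N j hjN]
    field_simp
  rw [Finset.sum_congr rfl hterm, ← Finset.sum_div, ← Finset.mul_sum, sum_range_add_one]
  push_cast
  ring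


lemma unifPair_eq (N : ℕ) : unifPair N = (μN N).prod (μN N) := rfl

lemma ae_pair {N : ℕ} (i j : Fin N) :
    ∀ᵐ q ∂((μN N).prod (μN N)),
      orderStat q.1 i ∈ Icc (0:ℝ) 1 ∧ orderStat q.2 j ∈ Icc (0:ℝ) 1 := by
  have hmi : MeasurableSet {x : Fin N → ℝ | ¬ orderStat x i ∈ Icc (0:ℝ) 1} :=
    ((measurable_orderStat i) measurableSet_Icc).compl
  have hmj : MeasurableSet {x : Fin N → ℝ | ¬ orderStat x j ∈ Icc (0:ℝ) 1} :=
    ((measurable_orderStat j) measurableSet_Icc).compl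
  have h1 : ∀ᵐ q ∂((μN N).prod (μN N)), orderStat q.1 i ∈ Icc (0:ℝ) 1 := by
    rw [ae_iff]
    have : {q : (Fin N → ℝ) × (Fin N → ℝ) | ¬ orderStat q.1 i ∈ Icc (0:ℝ) 1}
        = {x | ¬ orderStat x i ∈ Icc (0:ℝ) 1} ×ˢ Set.univ := by
      ext ⟨a, b⟩; simp
    rw [this, Measure.prod_prod]
    have h0 : μN N {x | ¬ orderStat x i ∈ Icc (0:ℝ) 1} = 0 := by
      rw [← ae_iff]; exact ae_orderStat_mem i
    rw [h0, zero_mul]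
  have h2 : ∀ᵐ q ∂((μN N).prod (μN N)), orderStat q.2 j ∈ Icc (0:ℝ) 1 := by
    rw [ae_iff]
    have : {q : (Fin N → ℝ) × (Fin N → ℝ) | ¬ orderStat q.2 j ∈ Icc (0:ℝ) 1}
        = Set.univ ×ˢ {x | ¬ orderStat x j ∈ Icc (0:ℝ) 1} := by
      ext ⟨a, b⟩; simp
    rw [this, Measure.prod_prod]
    have h0 : μN N {x | ¬ orderStat x j ∈ Icc (0:ℝ) 1} = 0 := by
      rw [← ae_iff]; exact ae_orderStat_mem j
    rw [h0, mul_zero]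
  exact h1.and h2

lemma integrable_bdd {γ : Type*} [MeasurableSpace γ] (μ : Measure γ) [IsProbabilityMeasure μ]
    {F : γ → ℝ} (hm : AEStronglyMeasurable F μ) (hb : ∀ᵐ x ∂μ, |F x| ≤ 1) :
    Integrable F μ := by
  refine Integrable.mono' (integrable_const 1) hm ?_
  simpa [Real.norm_eq_abs] using hb

lemma integrable_pair_sq {N : ℕ} (i j : Fin N) :
    Integrable (fun q : (Fin N → ℝ) × (Fin N → ℝ) =>
      (orderStat q.1 i - orderStat q.2 j) ^ 2) ((μN N).prod (μN N)) := by
  refine integrable_bdd _ ?_ ?_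
  · exact (((measurable_orderStat i).comp measurable_fst).sub
      ((measurable_orderStat j).comp measurable_snd)).pow_const 2 |>.aestronglyMeasurable
  · filter_upwards [ae_pair i j] with q hq
    obtain ⟨⟨a1, a2⟩, ⟨b1, b2⟩⟩ := hq
    rw [abs_of_nonneg (sq_nonneg _)]
    nlinarith [sq_nonneg (orderStat q.1 i - orderStat q.2 j)]

lemma pair_sq {N : ℕ} (i j : Fin N) :
    ∫ q, (orderStat q.1 i - orderStat q.2 j) ^ 2 ∂((μN N).prod (μN N))
      = ((i : ℕ) + 1 : ℝ) * ((i : ℕ) + 2 : ℝ) / (((N : ℝ) + 1) * ((N : ℝ) + 2))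
        + ((j : ℕ) + 1 : ℝ) * ((j : ℕ) + 2 : ℝ) / (((N : ℝ) + 1) * ((N : ℝ) + 2))
        - 2 * (((i : ℕ) + 1 : ℝ) / ((N : ℝ) + 1)) * (((j : ℕ) + 1 : ℝ) / ((N : ℝ) + 1)) := by
  have mi := measurable_orderStat (N := N) i
  have mj := measurable_orderStat (N := N) j
  have hsq1 : Integrable (fun q : (Fin N → ℝ) × (Fin N → ℝ) => (orderStat q.1 i) ^ 2)
      ((μN N).prod (μN N)) := by
    refine integrable_bdd _ (((mi.comp measurable_fst).pow_const 2).aestronglyMeasurable) ?_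
    filter_upwards [ae_pair i j] with q hq
    obtain ⟨⟨a1, a2⟩, -⟩ := hq
    rw [abs_of_nonneg (sq_nonneg _)]
    nlinarith
  have hsq2 : Integrable (fun q : (Fin N → ℝ) × (Fin N → ℝ) => (orderStat q.2 j) ^ 2)
      ((μN N).prod (μN N)) := by
    refine integrable_bdd _ (((mj.comp measurable_snd).pow_const 2).aestronglyMeasurable) ?_
    filter_upwards [ae_pair i j] with q hq
    obtain ⟨-, ⟨b1, b2⟩⟩ := hq
    rw [abs_of_nonneg (sq_nonneg _)]
    nlinarith
  have hmul : Integrable (fun q : (Fin N → ℝ) × (Fin N → ℝ) =>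
      orderStat q.1 i * orderStat q.2 j) ((μN N).prod (μN N)) := by
    refine integrable_bdd _ (((mi.comp measurable_fst).mul
      (mj.comp measurable_snd)).aestronglyMeasurable) ?_
    filter_upwards [ae_pair i j] with q hq
    obtain ⟨⟨a1, a2⟩, ⟨b1, b2⟩⟩ := hq
    rw [abs_mul]
    calc |orderStat q.1 i| * |orderStat q.2 j| ≤ 1 * 1 := by
          apply mul_le_mul (abs_le.2 ⟨by linarith, a2⟩) (abs_le.2 ⟨by linarith, b2⟩)
            (abs_nonneg _) zero_le_one
      _ = 1 := one_mul 1
  have hexp : ∫ q, (orderStat q.1 i - orderStat q.2 j) ^ 2 ∂((μN N).prod (μN N))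
      = ∫ q, ((orderStat q.1 i) ^ 2 + (orderStat q.2 j) ^ 2
          - 2 * (orderStat q.1 i * orderStat q.2 j)) ∂((μN N).prod (μN N)) := by
    apply integral_congr_ae (Eventually.of_forall fun q => ?_)
    ring
  have hsum : Integrable (fun q : (Fin N → ℝ) × (Fin N → ℝ) =>
      orderStat q.1 i ^ 2 + orderStat q.2 j ^ 2) ((μN N).prod (μN N)) := hsq1.add hsq2
  have hmul2 : Integrable (fun q : (Fin N → ℝ) × (Fin N → ℝ) =>
      2 * (orderStat q.1 i * orderStat q.2 j)) ((μN N).prod (μN N)) := hmul.const_mul 2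
  rw [hexp, integral_sub hsum hmul2, integral_add hsq1 hsq2, MeasureTheory.integral_const_mul]
  have e1 : ∫ q, (orderStat q.1 i) ^ 2 ∂((μN N).prod (μN N))
      = ∫ x, (orderStat x i) ^ 2 ∂(μN N) := by
    have : (fun q : (Fin N → ℝ) × (Fin N → ℝ) => (orderStat q.1 i) ^ 2)
        = fun q => (fun x => (orderStat x i) ^ 2) q.1 * (fun _ : Fin N → ℝ => (1:ℝ)) q.2 := by
      ext q; simp
    rw [this, integral_prod_mul (fun x => orderStat x i ^ 2) (fun _ : Fin N → ℝ => (1:ℝ))]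
    simp
  have e2 : ∫ q, (orderStat q.2 j) ^ 2 ∂((μN N).prod (μN N))
      = ∫ x, (orderStat x j) ^ 2 ∂(μN N) := by
    have : (fun q : (Fin N → ℝ) × (Fin N → ℝ) => (orderStat q.2 j) ^ 2)
        = fun q => (fun _ : Fin N → ℝ => (1:ℝ)) q.1 * (fun x => (orderStat x j) ^ 2) q.2 := by
      ext q; simp
    rw [this, integral_prod_mul (fun _ : Fin N → ℝ => (1:ℝ)) (fun x => orderStat x j ^ 2)]
    simp
  have e3 : ∫ q, orderStat q.1 i * orderStat q.2 j ∂((μN N).prod (μN N))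
      = (∫ x, orderStat x i ∂(μN N)) * (∫ x, orderStat x j ∂(μN N)) :=
    integral_prod_mul (fun x => orderStat x i) (fun x => orderStat x j)
  rw [e1, e2, e3, E1, E1, E2, E2]
  ring

lemma integrable_pair_sq' {N : ℕ} (i j : Fin N) :
    Integrable (fun q : (Fin N → ℝ) × (Fin N → ℝ) =>
      (orderStat q.2 i - orderStat q.1 j) ^ 2) ((μN N).prod (μN N)) := by
  have : (fun q : (Fin N → ℝ) × (Fin N → ℝ) => (orderStat q.2 i - orderStat q.1 j) ^ 2)
      = fun q => (orderStat q.1 j - orderStat q.2 i) ^ 2 := by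
    ext q; ring
  rw [this]
  exact integrable_pair_sq j i

lemma pair_sq' {N : ℕ} (i j : Fin N) :
    ∫ q, (orderStat q.2 i - orderStat q.1 j) ^ 2 ∂((μN N).prod (μN N))
      = ((j : ℕ) + 1 : ℝ) * ((j : ℕ) + 2 : ℝ) / (((N : ℝ) + 1) * ((N : ℝ) + 2))
        + ((i : ℕ) + 1 : ℝ) * ((i : ℕ) + 2 : ℝ) / (((N : ℝ) + 1) * ((N : ℝ) + 2))
        - 2 * (((j : ℕ) + 1 : ℝ) / ((N : ℝ) + 1)) * (((i : ℕ) + 1 : ℝ) / ((N : ℝ) + 1)) := by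
  have : (fun q : (Fin N → ℝ) × (Fin N → ℝ) => (orderStat q.2 i - orderStat q.1 j) ^ 2)
      = fun q => (orderStat q.1 j - orderStat q.2 i) ^ 2 := by
    ext q; ring
  rw [this, pair_sq j i]

lemma sum_poly (M : ℕ) (c0 c1 c2 : ℝ) :
    ∑ k ∈ Finset.range M, (c2 * (k:ℝ)^2 + c1 * (k:ℝ) + c0)
      = c2 * ((M:ℝ) * ((M:ℝ) - 1) * (2*(M:ℝ) - 1) / 6)
        + c1 * ((M:ℝ) * ((M:ℝ) - 1) / 2) + c0 * (M:ℝ) := by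
  induction M with
  | zero => simp
  | succ M ih => rw [Finset.sum_range_succ, ih]; push_cast; ring

/-- **Exact average optimal cost for `p = 2`.**  For every `N ≥ 2` the average cost of
the optimal (criss-cross) Hamiltonian cycle of the one-dimensional bipartite Euclidean
TSP with cost exponent `p = 2` and uniformly distributed points is
`(2/3)·(N² + 4N − 3)/(N+1)²`. -/
theorem average_optimal_cost_p2 (N : ℕ) (hN : 2 ≤ N) :
    ∫ q, crisscrossCostSq N (by omega) q ∂(unifPair N)
      = 2 / 3 * ((N : ℝ) ^ 2 + 4 * N - 3) / ((N : ℝ) + 1) ^ 2 := by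
  have hN1 : 1 ≤ N := by omega
  have hP : unifPair N = (μN N).prod (μN N) := rfl
  rw [hP]
  set P := (μN N).prod (μN N) with hPdef
  have hμ1prob : IsProbabilityMeasure μ1 := ⟨by simp [μ1]⟩
  have hμNprob : IsProbabilityMeasure (μN N) := by
    constructor; rw [μN, Measure.pi_univ]; simp [measure_univ]
  set i0 : Fin N := ⟨0, by omega⟩
  set iN : Fin N := ⟨N - 1, by omega⟩
  set a : Fin (N-1) → Fin N := fun k => ⟨k.val + 1, by have := k.isLt; omega⟩
  set b : Fin (N-1) → Fin N := fun k => ⟨k.val, by have := k.isLt; omega⟩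
  have hI1 : Integrable (fun q : (Fin N → ℝ) × (Fin N → ℝ) =>
      (orderStat q.1 i0 - orderStat q.2 i0) ^ 2) P := integrable_pair_sq i0 i0
  have hI2 : Integrable (fun q : (Fin N → ℝ) × (Fin N → ℝ) =>
      (orderStat q.1 iN - orderStat q.2 iN) ^ 2) P := integrable_pair_sq iN iN
  have hIk : ∀ k : Fin (N-1), Integrable (fun q : (Fin N → ℝ) × (Fin N → ℝ) =>
      (orderStat q.2 (a k) - orderStat q.1 (b k)) ^ 2
      + (orderStat q.1 (a k) - orderStat q.2 (b k)) ^ 2) P :=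
    fun k => (integrable_pair_sq' (a k) (b k)).add (integrable_pair_sq (a k) (b k))
  have hIsum : Integrable (fun q : (Fin N → ℝ) × (Fin N → ℝ) =>
      ∑ k : Fin (N-1), ((orderStat q.2 (a k) - orderStat q.1 (b k)) ^ 2
        + (orderStat q.1 (a k) - orderStat q.2 (b k)) ^ 2)) P := by
    have := integrable_finset_sum (μ := P) Finset.univ (fun (k : Fin (N-1)) _ => hIk k)
    exact this
  have hsplit : ∫ q, crisscrossCostSq N hN1 q ∂P
      = (∫ q, (orderStat q.1 i0 - orderStat q.2 i0) ^ 2 ∂P)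
        + (∫ q, (orderStat q.1 iN - orderStat q.2 iN) ^ 2 ∂P)
        + ∑ k : Fin (N-1), ∫ q, ((orderStat q.2 (a k) - orderStat q.1 (b k)) ^ 2
            + (orderStat q.1 (a k) - orderStat q.2 (b k)) ^ 2) ∂P := by
    have e : (fun q => crisscrossCostSq N hN1 q)
        = fun q : (Fin N → ℝ) × (Fin N → ℝ) =>
          ((orderStat q.1 i0 - orderStat q.2 i0) ^ 2
            + (orderStat q.1 iN - orderStat q.2 iN) ^ 2)
          + ∑ k : Fin (N-1), ((orderStat q.2 (a k) - orderStat q.1 (b k)) ^ 2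
            + (orderStat q.1 (a k) - orderStat q.2 (b k)) ^ 2) := by
      ext q; rw [crisscrossCostSq]
    have hI12 : Integrable (fun q : (Fin N → ℝ) × (Fin N → ℝ) =>
        (orderStat q.1 i0 - orderStat q.2 i0) ^ 2
        + (orderStat q.1 iN - orderStat q.2 iN) ^ 2) P := hI1.add hI2
    rw [e, integral_add hI12 hIsum, integral_add hI1 hI2,
      integral_finset_sum _ (fun k _ => hIk k), add_assoc]
  rw [hsplit]
  have hIkval : ∀ k : Fin (N-1),
      ∫ q, ((orderStat q.2 (a k) - orderStat q.1 (b k)) ^ 2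
        + (orderStat q.1 (a k) - orderStat q.2 (b k)) ^ 2) ∂P
      = ((4:ℝ)/(((N:ℝ)+1)*((N:ℝ)+2)) - 4/(((N:ℝ)+1)^2)) * (k:ℝ)^2
        + ((16:ℝ)/(((N:ℝ)+1)*((N:ℝ)+2)) - 12/(((N:ℝ)+1)^2)) * (k:ℝ)
        + ((16:ℝ)/(((N:ℝ)+1)*((N:ℝ)+2)) - 8/(((N:ℝ)+1)^2)) := by
    intro k
    rw [integral_add (integrable_pair_sq' (a k) (b k)) (integrable_pair_sq (a k) (b k)),
      pair_sq' (a k) (b k), pair_sq (a k) (b k)]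
    have ha : ((a k : Fin N) : ℕ) = (k : ℕ) + 1 := rfl
    have hb : ((b k : Fin N) : ℕ) = (k : ℕ) := rfl
    rw [ha, hb]
    have hD : ((N:ℝ)+1) * ((N:ℝ)+2) ≠ 0 := by positivity
    have hE : ((N:ℝ)+1) ≠ 0 := by positivity
    push_cast
    field_simp
    ring
  rw [Finset.sum_congr rfl (fun k _ => hIkval k), pair_sq i0 i0, pair_sq iN iN,
    Fin.sum_univ_eq_sum_range (fun k =>
      ((4:ℝ)/(((N:ℝ)+1)*((N:ℝ)+2)) - 4/(((N:ℝ)+1)^2)) * (k:ℝ)^2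
        + ((16:ℝ)/(((N:ℝ)+1)*((N:ℝ)+2)) - 12/(((N:ℝ)+1)^2)) * (k:ℝ)
        + ((16:ℝ)/(((N:ℝ)+1)*((N:ℝ)+2)) - 8/(((N:ℝ)+1)^2))) (N-1),
    sum_poly]
  have hi0 : ((i0 : Fin N) : ℕ) = 0 := rfl
  have hiN : ((iN : Fin N) : ℕ) = N - 1 := rfl
  rw [hi0, hiN]
  have hcast : ((N - 1 : ℕ) : ℝ) = (N : ℝ) - 1 := by
    rw [Nat.cast_sub hN1]; simp
  rw [hcast]
  have hD : ((N:ℝ)+1) * ((N:ℝ)+2) ≠ 0 := by positivity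
  have hE : ((N:ℝ)+1) ≠ 0 := by positivity
  have hE2 : ((N:ℝ)+2) ≠ 0 := by positivity
  push_cast
  field_simp
  ring
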